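/- Let n ≥ 1, N = 2n + 1, E > 0 and T ∈ (0, ∞). On (ℂ²)^{⊗N} with standard basis {e_b : b ∈ {0,1}^N}, let ρ = γ_T^{⊗N} where γ_T = diag(1, e^{−E/T})/(1 + e^{−E/T}), and let A = I₂^{⊗2n} ⊗ diag(0,1) be the projector onto the upper state of the last qubit. Then every unitary U attaining the minimum of tr(U ρ U† A) over all unitaries maps the span of {e_b : wgt(b) ≤ n} onto the span of {e_w : w_N = 0} and the span of {e_b : wgt(b) > n} onto the span of {e_w : w_N = 1}; hence after applying U the last qubit of a computational basis input b records MAJORITY(b). -/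

import Mathlib

/-- The Gibbs occupation probability of level `j ∈ {0,1}` of a two-level
system with energy gap `E` at temperature `T`. -/
noncomputable def qubitProb (E T : ℝ) (j : Fin 2) : ℝ :=
  (if j = 0 then 1 else Real.exp (-E / T)) / (1 + Real.exp (-E / T))

section Aux

open Finset Matrix

variable {ι : Type*} [Fintype ι] [DecidableEq ι]

lemma trace_re_eq (W : Matrix ι ι ℂ) (p : ι → ℝ) (Q : ι → Prop) [DecidablePred Q] :
    (Matrix.trace (W * Matrix.diagonal (fun b => ((p b : ℝ) : ℂ)) * star W *
      Matrix.diagonal (fun b => if Q b then (1:ℂ) else 0))).re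
    = ∑ w ∈ Finset.univ.filter Q, ∑ b, p b * Complex.normSq (W w b) := by
  have h1 : ∀ w, (W * Matrix.diagonal (fun b => ((p b : ℝ) : ℂ)) * star W) w w
      = ∑ b, ((p b * Complex.normSq (W w b) : ℝ) : ℂ) := by
    intro w
    rw [Matrix.mul_apply]
    congr 1; funext b
    rw [Matrix.mul_diagonal, Matrix.star_apply]
    push_cast
    have : W w b * star (W w b) = ((Complex.normSq (W w b) : ℝ) : ℂ) := Complex.mul_conj _
    rw [mul_comm (W w b) ((p b : ℂ)), mul_assoc, this]
  rw [Matrix.trace]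
  rw [Finset.sum_filter]
  simp only [Matrix.diag_apply, Matrix.mul_diagonal, h1]
  rw [Complex.re_sum]
  congr 1; funext w
  by_cases hw : Q w <;> simp [hw, Complex.re_sum]

lemma col_norm {U : Matrix ι ι ℂ} (hU : U ∈ Matrix.unitaryGroup ι ℂ) (b : ι) :
    ∑ w, Complex.normSq (U w b) = 1 := by
  have h := Matrix.mem_unitaryGroup_iff'.mp hU
  have h2 := congrArg (fun M => M b b) h
  simp only [Matrix.mul_apply, Matrix.star_apply, Matrix.one_apply_eq] at h2
  have h3 : ∑ w, (star (U w b) * U w b) = ((∑ w, Complex.normSq (U w b) : ℝ) : ℂ) := by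
    push_cast
    congr 1; funext w
    rw [Complex.star_def, mul_comm, Complex.mul_conj]
  rw [h3] at h2
  exact_mod_cast h2

lemma row_norm {U : Matrix ι ι ℂ} (hU : U ∈ Matrix.unitaryGroup ι ℂ) (w : ι) :
    ∑ b, Complex.normSq (U w b) = 1 := by
  have h := Matrix.mem_unitaryGroup_iff.mp hU
  have h2 := congrArg (fun M => M w w) h
  simp only [Matrix.mul_apply, Matrix.star_apply, Matrix.one_apply_eq] at h2
  have h3 : ∑ b, (U w b * star (U w b)) = ((∑ b, Complex.normSq (U w b) : ℝ) : ℂ) := by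
    push_cast
    congr 1; funext b
    exact Complex.mul_conj _
  rw [h3] at h2
  exact_mod_cast h2

lemma perm_unitary (σ : Equiv.Perm ι) :
    (Matrix.of fun w b => if σ b = w then (1:ℂ) else 0) ∈ Matrix.unitaryGroup ι ℂ := by
  rw [Matrix.mem_unitaryGroup_iff']
  ext b b'
  simp only [Matrix.mul_apply, Matrix.star_apply, Matrix.of_apply]
  simp only [apply_ite star, star_one, star_zero]
  rw [Finset.sum_eq_single (σ b)]
  · by_cases h : b = b' <;> simp [h, Matrix.one_apply, σ.injective.eq_iff]
    · exact fun h2 => h h2.symm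
  · intro w _ hw; simp [Ne.symm hw]
  · simp

lemma exists_perm (L S : Finset ι) (h : L.card = S.card) :
    ∃ σ : Equiv.Perm ι, ∀ b, b ∈ L ↔ σ b ∈ S := by
  have h2 : Lᶜ.card = Sᶜ.card := by simp [Finset.card_compl, h]
  let e1 : {x // x ∈ L} ≃ {x // x ∈ S} := Finset.equivOfCardEq h
  let e2 : {x // ¬ x ∈ L} ≃ {x // ¬ x ∈ S} :=
    ((Equiv.subtypeEquivRight fun x => (Finset.mem_compl (s := L)).symm).trans
      (Finset.equivOfCardEq h2)).trans
      (Equiv.subtypeEquivRight fun x => (Finset.mem_compl (s := S)))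
  refine ⟨Equiv.subtypeCongr e1 e2, fun b => ?_⟩
  by_cases hb : b ∈ L
  · have : Equiv.subtypeCongr e1 e2 b = (e1 ⟨b, hb⟩ : ι) := by
      simp [Equiv.subtypeCongr, Equiv.sumCompl_symm_apply_of_pos hb]
    rw [this]
    simpa [hb] using (e1 ⟨b, hb⟩).2
  · have : Equiv.subtypeCongr e1 e2 b = (e2 ⟨b, hb⟩ : ι) := by
      simp [Equiv.subtypeCongr, Equiv.sumCompl_symm_apply_of_neg hb]
    rw [this]
    simpa [hb] using (e2 ⟨b, hb⟩).2

lemma perm_obj (σ : Equiv.Perm ι) (p : ι → ℝ) (S1 : Finset ι) :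
    ∑ w ∈ S1, ∑ b, p b *
        Complex.normSq ((Matrix.of fun w b => if σ b = w then (1:ℂ) else 0) w b)
      = ∑ b ∈ S1.map σ.symm.toEmbedding, p b := by
  rw [Finset.sum_map]
  refine Finset.sum_congr rfl fun w _ => ?_
  rw [Finset.sum_eq_single (σ.symm w)]
  · simp
  · intro b _ hb
    rw [Matrix.of_apply, if_neg (fun h => hb (by rw [← h, Equiv.symm_apply_apply]))]
    simp
  · simp

lemma opt_lemma (p c : ι → ℝ) (L : Finset ι) (α β : ℝ) (hαβ : β < α)
    (hpl : ∀ b ∈ L, α ≤ p b) (hph : ∀ b ∉ L, p b ≤ β)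
    (hc0 : ∀ b, 0 ≤ c b) (hc1 : ∀ b, c b ≤ 1)
    (hsum : ∑ b, c b = (Lᶜ.card : ℝ))
    (hopt : ∑ b, p b * c b ≤ ∑ b ∈ Lᶜ, p b) :
    (∀ b ∈ L, c b = 0) ∧ (∀ b ∉ L, c b = 1) := by
  set t := ∑ b ∈ L, c b with ht
  have hsplit : ∑ b ∈ L, c b + ∑ b ∈ Lᶜ, c b = ∑ b, c b := Finset.sum_add_sum_compl L c
  have h1 : ∑ b ∈ Lᶜ, (1 - c b) = t := by
    rw [Finset.sum_sub_distrib, Finset.sum_const, nsmul_eq_mul, mul_one]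
    linarith [hsplit, hsum]
  have h3 : α * t ≤ ∑ b ∈ L, p b * c b := by
    rw [ht, Finset.mul_sum]
    exact Finset.sum_le_sum fun b hb => mul_le_mul_of_nonneg_right (hpl b hb) (hc0 b)
  have h4 : ∑ b ∈ Lᶜ, p b * (1 - c b) ≤ β * t := by
    rw [← h1, Finset.mul_sum]
    refine Finset.sum_le_sum fun b hb => ?_
    exact mul_le_mul_of_nonneg_right (hph b (Finset.mem_compl.mp hb)) (by linarith [hc1 b])
  have h5 : ∑ b ∈ Lᶜ, p b * c b = ∑ b ∈ Lᶜ, p b - ∑ b ∈ Lᶜ, p b * (1 - c b) := by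
    rw [← Finset.sum_sub_distrib]
    refine Finset.sum_congr rfl fun b _ => by ring
  have hsplit2 : ∑ b ∈ L, p b * c b + ∑ b ∈ Lᶜ, p b * c b = ∑ b, p b * c b :=
    Finset.sum_add_sum_compl L _
  have ht0 : 0 ≤ t := Finset.sum_nonneg fun b _ => hc0 b
  have ht1 : t = 0 := by nlinarith
  constructor
  · intro b hb
    exact (Finset.sum_eq_zero_iff_of_nonneg (fun b _ => hc0 b)).mp ht1 b hb
  · intro b hb
    have h6 : ∑ b ∈ Lᶜ, (1 - c b) = 0 := by rw [h1, ht1]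
    have := (Finset.sum_eq_zero_iff_of_nonneg
      (fun b _ => by linarith [hc1 b])).mp h6 b (Finset.mem_compl.mpr hb)
    linarith

lemma set_eq_range (P : ι → Prop) :
    {v : ι → ℂ | ∃ b, P b ∧ v = Pi.single b 1}
      = Set.range (fun b : {x // P x} => Pi.single (b : ι) (1:ℂ)) := by
  ext v
  constructor
  · rintro ⟨b, hb, rfl⟩; exact ⟨⟨b, hb⟩, rfl⟩
  · rintro ⟨⟨b, hb⟩, rfl⟩; exact ⟨b, hb, rfl⟩

lemma single_eq_smul (w : ι) (x : ℂ) :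
    (Pi.single w x : ι → ℂ) = x • (Pi.single w (1:ℂ) : ι → ℂ) := by
  funext j
  by_cases h : j = w <;> simp [h, Pi.single_apply]

lemma mem_span_single (P : ι → Prop) (v : ι → ℂ) (hv : ∀ w, ¬ P w → v w = 0) :
    v ∈ Submodule.span ℂ {v : ι → ℂ | ∃ b, P b ∧ v = Pi.single b 1} := by
  have hv2 : v = ∑ w, Pi.single w (v w) := (Finset.univ_sum_single v).symm
  rw [hv2]
  refine Submodule.sum_mem _ fun w _ => ?_
  by_cases hw : P w
  · rw [single_eq_smul]
    exact Submodule.smul_mem _ _ (Submodule.subset_span ⟨w, hw, rfl⟩)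
  · rw [hv w hw]
    simp

lemma finrank_span_single (P : ι → Prop) [DecidablePred P] :
    Module.finrank ℂ (Submodule.span ℂ {v : ι → ℂ | ∃ b, P b ∧ v = Pi.single b 1})
      = (Finset.univ.filter P).card := by
  rw [set_eq_range]
  have hli : LinearIndependent ℂ
      (fun b : {x // P x} => (Pi.single (b : ι) (1:ℂ) : ι → ℂ)) := by
    have := (Pi.basisFun ℂ ι).linearIndependent
    have h2 := this.comp (Subtype.val : {x // P x} → ι) Subtype.val_injective
    convert h2 using 1
    funext b
    simp [Pi.basisFun_apply]
  rw [finrank_span_eq_card hli, Fintype.card_subtype]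

lemma half_card (P : ι → Prop) [DecidablePred P] (e : ι ≃ ι)
    (h : ∀ b, P (e b) ↔ ¬ P b) :
    2 * (Finset.univ.filter P).card = Fintype.card ι := by
  have key : (Finset.univ.filter fun b => ¬ P b)
      = (Finset.univ.filter P).map e.toEmbedding := by
    ext b
    simp only [Finset.mem_map_equiv, Finset.mem_filter, Finset.mem_univ, true_and]
    have h2 := h (e.symm b)
    rw [Equiv.apply_symm_apply] at h2
    tauto
  have h3 := Finset.card_filter_add_card_filter_not (s := Finset.univ) P
  rw [key, Finset.card_map, Finset.card_univ] at h3
  omega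

end Aux

def negBit : Fin 2 ≃ Fin 2 where
  toFun j := 1 - j
  invFun j := 1 - j
  left_inv := by decide
  right_inv := by decide

lemma negBit_coe : ∀ j : Fin 2, (negBit j : ℕ) + (j : ℕ) = 1 := by decide

lemma negBit_negBit : ∀ j : Fin 2, negBit (negBit j) = j := by decide

lemma card_low (n : ℕ) :
    (Finset.univ.filter fun b : Fin (2*n+1) → Fin 2 => (∑ i, (b i : ℕ)) ≤ n).card
      = 2 ^ (2*n) := by
  have hprop : ∀ b : Fin (2*n+1) → Fin 2,
      ((∑ i, ((Equiv.piCongrRight fun _ => negBit) b i : ℕ)) ≤ n) ↔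
        ¬ (∑ i, (b i : ℕ)) ≤ n := by
    intro b
    have hsum : (∑ i, ((Equiv.piCongrRight fun _ => negBit) b i : ℕ)) + ∑ i, (b i : ℕ)
        = 2*n+1 := by
      rw [← Finset.sum_add_distrib]
      simp only [Equiv.piCongrRight_apply, Pi.map_apply, negBit_coe]
      simp
    omega
  have h := half_card (fun b : Fin (2*n+1) → Fin 2 => (∑ i, (b i : ℕ)) ≤ n)
    (Equiv.piCongrRight fun _ => negBit) hprop
  rw [Fintype.card_fun] at h
  simp only [Fintype.card_fin] at h
  exact Nat.eq_of_mul_eq_mul_left (by norm_num) (h.trans (by ring))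

lemma card_high (n : ℕ) :
    (Finset.univ.filter fun b : Fin (2*n+1) → Fin 2 => n < ∑ i, (b i : ℕ)).card
      = 2 ^ (2*n) := by
  have h := Finset.card_filter_add_card_filter_not
    (s := Finset.univ) (fun b : Fin (2*n+1) → Fin 2 => (∑ i, (b i : ℕ)) ≤ n)
  have h2 : (Finset.univ.filter fun b : Fin (2*n+1) → Fin 2 => ¬ (∑ i, (b i : ℕ)) ≤ n)
      = Finset.univ.filter fun b : Fin (2*n+1) → Fin 2 => n < ∑ i, (b i : ℕ) := by
    apply Finset.filter_congr; intro b _; simp [not_le]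
  rw [h2, card_low, Finset.card_univ, Fintype.card_fun] at h
  simp only [Fintype.card_fin] at h
  exact Nat.add_left_cancel (h.trans (by ring))

def flipLast (n : ℕ) : (Fin (2*n+1) → Fin 2) ≃ (Fin (2*n+1) → Fin 2) where
  toFun b := Function.update b (Fin.last (2*n)) (negBit (b (Fin.last (2*n))))
  invFun b := Function.update b (Fin.last (2*n)) (negBit (b (Fin.last (2*n))))
  left_inv b := by
    funext i
    rcases eq_or_ne i (Fin.last (2*n)) with h | h
    · subst h; simp [negBit_negBit]
    · simp [Function.update_of_ne h]
  right_inv b := by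
    funext i
    rcases eq_or_ne i (Fin.last (2*n)) with h | h
    · subst h; simp [negBit_negBit]
    · simp [Function.update_of_ne h]

lemma card_lastbit (n : ℕ) (j : Fin 2) :
    (Finset.univ.filter fun w : Fin (2*n+1) → Fin 2 => w (Fin.last (2*n)) = j).card
      = 2 ^ (2*n) := by
  have hprop : ∀ b : Fin (2*n+1) → Fin 2,
      ((flipLast n) b (Fin.last (2*n)) = j) ↔ ¬ b (Fin.last (2*n)) = j := by
    intro b
    simp only [flipLast, Equiv.coe_fn_mk, Function.update_self]
    have : ∀ x j : Fin 2, (negBit x = j ↔ ¬ x = j) := by decide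
    exact this _ _
  have h := half_card (fun w : Fin (2*n+1) → Fin 2 => w (Fin.last (2*n)) = j)
    (flipLast n) hprop
  rw [Fintype.card_fun] at h
  simp only [Fintype.card_fin] at h
  exact Nat.eq_of_mul_eq_mul_left (by norm_num) (h.trans (by ring))

lemma qubitProb_eq (E T : ℝ) (j : Fin 2) :
    qubitProb E T j = Real.exp (-E / T) ^ (j : ℕ) / (1 + Real.exp (-E / T)) := by
  fin_cases j <;> simp [qubitProb]

lemma gibbs_prod (E T : ℝ) (N : ℕ) (b : Fin N → Fin 2) :
    ∏ i, qubitProb E T (b i)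
      = Real.exp (-E / T) ^ (∑ i, (b i : ℕ)) / (1 + Real.exp (-E / T)) ^ N := by
  simp only [qubitProb_eq]
  rw [Finset.prod_div_distrib, Finset.prod_const, Finset.prod_pow_eq_pow_sum]
  simp

/-- **An optimal refrigerator for one qubit out of 2n+1 equally warm qubits
computes MAJORITY.**  Every unitary minimizing the population of the upper
level of the last qubit maps the span of the basis vectors of Hamming weight
at most `n` onto the span of those whose last bit is `0`, and the span of the
basis vectors of Hamming weight greater than `n` onto the span of those whose
last bit is `1`. -/
theorem stmt_16 (n : ℕ) (hn : 1 ≤ n) (E T : ℝ) (hE : 0 < E) (hT : 0 < T)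
    (U : Matrix (Fin (2 * n + 1) → Fin 2) (Fin (2 * n + 1) → Fin 2) ℂ)
    (hU : U ∈ Matrix.unitaryGroup (Fin (2 * n + 1) → Fin 2) ℂ)
    (hopt : ∀ V ∈ Matrix.unitaryGroup (Fin (2 * n + 1) → Fin 2) ℂ,
      (Matrix.trace (U *
          Matrix.diagonal (fun b : Fin (2 * n + 1) → Fin 2 =>
            ((∏ i, qubitProb E T (b i) : ℝ) : ℂ)) *
          star U *
          Matrix.diagonal (fun b : Fin (2 * n + 1) → Fin 2 =>
            if b (Fin.last (2 * n)) = 1 then (1 : ℂ) else 0))).re ≤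
      (Matrix.trace (V *
          Matrix.diagonal (fun b : Fin (2 * n + 1) → Fin 2 =>
            ((∏ i, qubitProb E T (b i) : ℝ) : ℂ)) *
          star V *
          Matrix.diagonal (fun b : Fin (2 * n + 1) → Fin 2 =>
            if b (Fin.last (2 * n)) = 1 then (1 : ℂ) else 0))).re) :
    Submodule.map U.mulVecLin
        (Submodule.span ℂ {v : (Fin (2 * n + 1) → Fin 2) → ℂ |
          ∃ b : Fin (2 * n + 1) → Fin 2,
            (∑ i, (b i : ℕ)) ≤ n ∧ v = Pi.single b 1}) =
      Submodule.span ℂ {v : (Fin (2 * n + 1) → Fin 2) → ℂ |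
        ∃ w : Fin (2 * n + 1) → Fin 2,
          w (Fin.last (2 * n)) = 0 ∧ v = Pi.single w 1} ∧
    Submodule.map U.mulVecLin
        (Submodule.span ℂ {v : (Fin (2 * n + 1) → Fin 2) → ℂ |
          ∃ b : Fin (2 * n + 1) → Fin 2,
            n < (∑ i, (b i : ℕ)) ∧ v = Pi.single b 1}) =
      Submodule.span ℂ {v : (Fin (2 * n + 1) → Fin 2) → ℂ |
        ∃ w : Fin (2 * n + 1) → Fin 2,
          w (Fin.last (2 * n)) = 1 ∧ v = Pi.single w 1} := by
  classical
  -- abbreviations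
  set r : ℝ := Real.exp (-E / T) with hrdef
  have hr0 : 0 < r := Real.exp_pos _
  have hr1 : r < 1 := by
    rw [hrdef]
    apply Real.exp_lt_one_iff.mpr  -- may need renaming
    exact div_neg_of_neg_of_pos (neg_neg_of_pos hE) hT
  have hZN : (0:ℝ) < (1 + r) ^ (2*n+1) := pow_pos (by linarith) _
  set p : (Fin (2*n+1) → Fin 2) → ℝ := fun b => ∏ i, qubitProb E T (b i) with hp
  have hpval : ∀ b, p b = r ^ (∑ i, (b i : ℕ)) / (1 + r) ^ (2*n+1) := by
    intro b; rw [hp]; exact gibbs_prod E T _ b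
  set L : Finset (Fin (2*n+1) → Fin 2) :=
    Finset.univ.filter (fun b => (∑ i, (b i : ℕ)) ≤ n) with hL
  set S1 : Finset (Fin (2*n+1) → Fin 2) :=
    Finset.univ.filter (fun w => w (Fin.last (2*n)) = 1) with hS1
  have hLcard : L.card = 2^(2*n) := card_low n
  have hS1card : S1.card = 2^(2*n) := card_lastbit n 1
  have hcard_univ : Fintype.card (Fin (2*n+1) → Fin 2) = 2^(2*n+1) := by
    rw [Fintype.card_fun]; simp
  have hLccard : Lᶜ.card = 2^(2*n) := by
    rw [Finset.card_compl, hLcard, hcard_univ]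
    have : (2:ℕ)^(2*n+1) = 2^(2*n) + 2^(2*n) := by ring
    omega
  have hS1ccard : S1ᶜ.card = 2^(2*n) := by
    rw [Finset.card_compl, hS1card, hcard_univ]
    have : (2:ℕ)^(2*n+1) = 2^(2*n) + 2^(2*n) := by ring
    omega
  -- a permutation sending L onto S1ᶜ
  obtain ⟨σ, hσ⟩ := exists_perm L S1ᶜ (by rw [hLcard, hS1ccard])
  set V : Matrix (Fin (2*n+1) → Fin 2) (Fin (2*n+1) → Fin 2) ℂ :=
    Matrix.of fun w b => if σ b = w then (1:ℂ) else 0 with hVdef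
  -- translate the optimality hypothesis
  have key := hopt V (perm_unitary σ)
  rw [trace_re_eq U p (fun w => w (Fin.last (2*n)) = 1),
    trace_re_eq V p (fun w => w (Fin.last (2*n)) = 1)] at key
  have hVobj : ∑ w ∈ S1, ∑ b, p b * Complex.normSq (V w b) = ∑ b ∈ Lᶜ, p b := by
    rw [hVdef, perm_obj σ p S1]
    congr 1
    ext b
    rw [Finset.mem_map_equiv, Equiv.symm_symm, Finset.mem_compl]
    have h2 := hσ b
    rw [Finset.mem_compl] at h2
    tauto
  -- the column masses
  set c : (Fin (2*n+1) → Fin 2) → ℝ := fun b => ∑ w ∈ S1, Complex.normSq (U w b) with hc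
  have hswap : ∑ w ∈ S1, ∑ b, p b * Complex.normSq (U w b) = ∑ b, p b * c b := by
    rw [Finset.sum_comm]
    exact Finset.sum_congr rfl fun b _ => by rw [hc, Finset.mul_sum]
  have hc0 : ∀ b, 0 ≤ c b := fun b =>
    Finset.sum_nonneg fun w _ => Complex.normSq_nonneg _
  have hc1 : ∀ b, c b ≤ 1 := by
    intro b
    calc c b ≤ ∑ w, Complex.normSq (U w b) :=
          Finset.sum_le_sum_of_subset_of_nonneg (Finset.subset_univ S1)
            (fun w _ _ => Complex.normSq_nonneg _)
      _ = 1 := col_norm hU b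
  have hcsum : ∑ b, c b = (Lᶜ.card : ℝ) := by
    rw [show ∑ b, c b = ∑ w ∈ S1, ∑ b, Complex.normSq (U w b) from Finset.sum_comm ..,
      Finset.sum_congr rfl (fun w _ => row_norm hU w)]
    simp [hS1card, hLccard]
  -- the separation constants
  set α : ℝ := r^n / (1 + r)^(2*n+1) with hα
  set β : ℝ := r^(n+1) / (1 + r)^(2*n+1) with hβ
  have hβα : β < α := by
    rw [hα, hβ]
    exact (div_lt_div_iff_of_pos_right hZN).mpr (pow_lt_pow_right_of_lt_one₀ hr0 hr1 (Nat.lt_succ_self n))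
  have hpl : ∀ b ∈ L, α ≤ p b := by
    intro b hb
    rw [hL, Finset.mem_filter] at hb
    rw [hpval, hα]
    exact div_le_div_of_nonneg_right (pow_le_pow_of_le_one hr0.le hr1.le hb.2) hZN.le
  have hph : ∀ b ∉ L, p b ≤ β := by
    intro b hb
    rw [hL, Finset.mem_filter] at hb
    simp only [Finset.mem_univ, true_and, not_le] at hb
    rw [hpval, hβ]
    exact div_le_div_of_nonneg_right (pow_le_pow_of_le_one hr0.le hr1.le hb) hZN.le
  have hopt' : ∑ b, p b * c b ≤ ∑ b ∈ Lᶜ, p b := by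
    rw [← hswap]; rw [hVobj] at key; exact key
  obtain ⟨hcl, hch⟩ := opt_lemma p c L α β hβα hpl hph hc0 hc1 hcsum hopt'
  -- zero-entry facts
  have hfin2 : ∀ j : Fin 2, ¬ j = 0 → j = 1 := by decide
  have hfin2' : ∀ j : Fin 2, ¬ j = 1 → j = 0 := by decide
  have hUzero1 : ∀ b, (∑ i, (b i : ℕ)) ≤ n → ∀ w, w (Fin.last (2*n)) = 1 → U w b = 0 := by
    intro b hb w hw
    have hbl : b ∈ L := by rw [hL, Finset.mem_filter]; exact ⟨Finset.mem_univ _, hb⟩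
    have h0 := hcl b hbl
    rw [hc] at h0
    have := (Finset.sum_eq_zero_iff_of_nonneg fun w _ => Complex.normSq_nonneg _).mp h0 w
      (by rw [hS1, Finset.mem_filter]; exact ⟨Finset.mem_univ _, hw⟩)
    exact Complex.normSq_eq_zero.mp this
  have hUzero2 : ∀ b, n < (∑ i, (b i : ℕ)) → ∀ w, w (Fin.last (2*n)) = 0 → U w b = 0 := by
    intro b hb w hw
    have hbl : b ∉ L := by
      rw [hL, Finset.mem_filter]; push_neg; intro _; omega
    have h1 := hch b hbl
    rw [hc] at h1
    have hcol := col_norm hU b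
    have hsplitc : ∑ w ∈ S1, Complex.normSq (U w b) + ∑ w ∈ S1ᶜ, Complex.normSq (U w b)
        = ∑ w, Complex.normSq (U w b) := Finset.sum_add_sum_compl S1 _
    have h2 : ∑ w ∈ S1ᶜ, Complex.normSq (U w b) = 0 := by
      rw [hcol] at hsplitc; linarith
    have := (Finset.sum_eq_zero_iff_of_nonneg fun w _ => Complex.normSq_nonneg _).mp h2 w
      (by
        rw [Finset.mem_compl, hS1, Finset.mem_filter]
        push_neg
        intro _
        rw [hw]; decide)
    exact Complex.normSq_eq_zero.mp this
  -- injectivity of U.mulVecLin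
  have hinj : Function.Injective U.mulVecLin := by
    have h := Matrix.mem_unitaryGroup_iff'.mp hU
    have hleft : ∀ x : (Fin (2*n+1) → Fin 2) → ℂ,
        (star U).mulVec (U.mulVec x) = x := by
      intro x; rw [Matrix.mulVec_mulVec, h, Matrix.one_mulVec]
    intro x y hxy
    simp only [Matrix.mulVecLin_apply] at hxy
    calc x = (star U).mulVec (U.mulVec x) := (hleft x).symm
      _ = (star U).mulVec (U.mulVec y) := by rw [hxy]
      _ = y := hleft y
  -- the two span equalities
  have main : ∀ (Pb Pw : (Fin (2*n+1) → Fin 2) → Prop)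
      [DecidablePred Pb] [DecidablePred Pw],
      (∀ b, Pb b → ∀ w, ¬ Pw w → U w b = 0) →
      (Finset.univ.filter Pb).card = 2^(2*n) →
      (Finset.univ.filter Pw).card = 2^(2*n) →
      Submodule.map U.mulVecLin
        (Submodule.span ℂ {v : (Fin (2*n+1) → Fin 2) → ℂ | ∃ b, Pb b ∧ v = Pi.single b 1})
      = Submodule.span ℂ {v : (Fin (2*n+1) → Fin 2) → ℂ | ∃ w, Pw w ∧ v = Pi.single w 1} := by
    intro Pb Pw _ _ hz hcb hcw
    have hle : Submodule.map U.mulVecLin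
        (Submodule.span ℂ {v : (Fin (2*n+1) → Fin 2) → ℂ | ∃ b, Pb b ∧ v = Pi.single b 1})
        ≤ Submodule.span ℂ {v : (Fin (2*n+1) → Fin 2) → ℂ | ∃ w, Pw w ∧ v = Pi.single w 1} := by
      rw [Submodule.map_span]
      apply Submodule.span_le.mpr
      rintro v ⟨x, ⟨b, hb, rfl⟩, rfl⟩
      apply mem_span_single Pw
      intro w hw
      show U.mulVecLin (Pi.single b 1) w = 0
      rw [Matrix.mulVecLin_apply, Matrix.mulVec_single]
      simpa using hz b hb w hw
    refine Submodule.eq_of_le_of_finrank_eq hle ?_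
    have e := Submodule.equivMapOfInjective U.mulVecLin hinj
      (Submodule.span ℂ {v : (Fin (2*n+1) → Fin 2) → ℂ | ∃ b, Pb b ∧ v = Pi.single b 1})
    rw [← LinearEquiv.finrank_eq e, finrank_span_single Pb, finrank_span_single Pw, hcb, hcw]
  constructor
  · exact main (fun b => (∑ i, (b i : ℕ)) ≤ n) (fun w => w (Fin.last (2*n)) = 0)
      (fun b hb w hw => hUzero1 b hb w (hfin2 _ hw)) (card_low n) (card_lastbit n 0)
  · exact main (fun b => n < (∑ i, (b i : ℕ))) (fun w => w (Fin.last (2*n)) = 1)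
      (fun b hb w hw => hUzero2 b hb w (hfin2' _ hw)) (card_high n) (card_lastbit n 1)
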